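/- Let A ⊆ B be fields and let T = A + XB[X]. Then every prime ideal of T different from the ideal XB[X] = {f ∈ T : f has zero constant coefficient} is a principal ideal of T. -/
import Mathlib


/-- The composite `T = A + X B[X]` for a subfield `A` of a field `B`: the subring
(an integral domain) of the polynomial ring `B[X]` consisting of all polynomials
whose constant coefficient lies in `A`. -/
def fieldComposite (B : Type*) [Field B] (A : Subfield B) :
    Subring (Polynomial B) where
  carrier := {f | f.coeff 0 ∈ A}
  zero_mem' := by simpa using zero_mem A
  one_mem' := by simpa using one_mem A
  add_mem' := fun hf hg => by
    simpa [Polynomial.coeff_add] using add_mem hf hg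
  neg_mem' := fun hf => by
    simpa [Polynomial.coeff_neg] using neg_mem (s := A) hf
  mul_mem' := fun hf hg => by
    simpa [Polynomial.mul_coeff_zero] using mul_mem hf hg

/-- The ideal `X B[X] = {f ∈ T : f has zero constant coefficient}` of the composite
`T = A + X B[X]`. -/
def fieldCompositeAugIdeal (B : Type*) [Field B] (A : Subfield B) :
    Ideal (fieldComposite B A) where
  carrier := {f | (f : Polynomial B).coeff 0 = 0}
  zero_mem' := by simp
  add_mem' := fun {a b} ha hb => by
    have h : ((a + b : fieldComposite B A) : Polynomial B) = (a : Polynomial B) + b := rfl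
    simp only [Set.mem_setOf_eq] at *
    rw [h, Polynomial.coeff_add, ha, hb, add_zero]
  smul_mem' := fun c x hx => by
    have h : ((c • x : fieldComposite B A) : Polynomial B)
        = (c : Polynomial B) * (x : Polynomial B) := rfl
    simp only [Set.mem_setOf_eq] at *
    rw [h, Polynomial.mul_coeff_zero, hx, mul_zero]

open Polynomial

section FCaux
variable {B : Type*} [Field B] {A : Subfield B}

lemma memT_iff {f : Polynomial B} : f ∈ fieldComposite B A ↔ f.coeff 0 ∈ A := Iff.rfl

lemma memAug_iff {f : fieldComposite B A} :
    f ∈ fieldCompositeAugIdeal B A ↔ (f : Polynomial B).coeff 0 = 0 := Iff.rfl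

lemma Xmul_memT (A : Subfield B) (s : Polynomial B) : X * s ∈ fieldComposite B A := by
  rw [memT_iff, mul_coeff_zero, coeff_X_zero, zero_mul]
  exact zero_mem A

lemma exists_X_mul {f : Polynomial B} (hc : f.coeff 0 = 0) :
    ∃ d : Polynomial B, f = X * d := by
  refine ⟨f.divX, ?_⟩
  conv_lhs => rw [← f.X_mul_divX_add]
  simp [hc]

variable (B A) in
noncomputable def xT : fieldComposite B A := ⟨X, by
  rw [memT_iff, coeff_X_zero]; exact zero_mem A⟩

lemma fc_X_not_mem (P : Ideal (fieldComposite B A)) (hP : P.IsPrime)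
    (hne : P ≠ fieldCompositeAugIdeal B A) : xT B A ∉ P := by
  intro hXP
  apply hne
  have haug : fieldCompositeAugIdeal B A ≤ P := by
    intro f hf
    obtain ⟨d, hfd⟩ := exists_X_mul (memAug_iff.mp hf)
    have hsq : f * f = (⟨_, Xmul_memT A (d ^ 2)⟩ : fieldComposite B A) * xT B A := by
      apply Subtype.ext
      push_cast
      rw [hfd]
      show X * d * (X * d) = X * d ^ 2 * X
      ring
    have : f * f ∈ P := hsq ▸ Ideal.mul_mem_left _ _ hXP
    rcases hP.mem_or_mem this with h | h <;> exact h
  refine le_antisymm ?_ haug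
  intro f hf
  by_contra hc
  have hc : (f : Polynomial B).coeff 0 ≠ 0 := hc
  have hA : (f : Polynomial B).coeff 0 ∈ A := f.2
  have hu : (C ((f : Polynomial B).coeff 0) : Polynomial B) ∈ fieldComposite B A := by
    rw [memT_iff, coeff_C_zero]; exact hA
  have hgaug : f - ⟨_, hu⟩ ∈ fieldCompositeAugIdeal B A := by
    rw [memAug_iff]
    push_cast
    simp
  have huP : (⟨_, hu⟩ : fieldComposite B A) ∈ P := by
    have := P.sub_mem hf (haug hgaug)
    simpa using this
  have hv : (C (((f : Polynomial B).coeff 0)⁻¹) : Polynomial B) ∈ fieldComposite B A := by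
    rw [memT_iff, coeff_C_zero]; exact A.inv_mem hA
  have hone : (⟨_, hu⟩ : fieldComposite B A) * ⟨_, hv⟩ = 1 := by
    apply Subtype.ext
    push_cast
    rw [← C_mul, mul_inv_cancel₀ hc, map_one]
  exact hP.ne_top ((Ideal.eq_top_iff_one P).mpr (hone ▸ Ideal.mul_mem_right _ _ huP))

lemma fc_exists_const (P : Ideal (fieldComposite B A)) (hP : P.IsPrime)
    (hX : xT B A ∉ P) :
    ∀ n : ℕ, ∀ f : fieldComposite B A, f ∈ P → (f : Polynomial B) ≠ 0 →
      (f : Polynomial B).natDegree ≤ n →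
      ∃ p ∈ P, (p : Polynomial B).coeff 0 ≠ 0 := by
  intro n
  induction n with
  | zero =>
    intro f hf hf0 hdeg
    refine ⟨f, hf, ?_⟩
    intro hc
    apply hf0
    rw [Polynomial.eq_C_of_natDegree_le_zero hdeg, hc, map_zero]
  | succ n ih =>
    intro f hf hf0 hdeg
    by_cases hc : (f : Polynomial B).coeff 0 = 0
    · obtain ⟨d, hfd⟩ := exists_X_mul hc
      have hd0 : d ≠ 0 := by
        intro h; apply hf0; rw [hfd, h, mul_zero]
      have hdeg' : d.natDegree ≤ n := by
        have : (f : Polynomial B).natDegree = d.natDegree + 1 := by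
          rw [hfd, natDegree_X_mul hd0]
        omega
      by_cases hc' : d.coeff 0 = 0
      · have hdT : d ∈ fieldComposite B A := by rw [memT_iff, hc']; exact zero_mem A
        have hsplit : f = xT B A * ⟨d, hdT⟩ := Subtype.ext (by push_cast; rw [hfd]; rfl)
        have hdP : (⟨d, hdT⟩ : fieldComposite B A) ∈ P := by
          rcases hP.mem_or_mem (hsplit ▸ hf) with h | h
          · exact absurd h hX
          · exact h
        exact ih ⟨d, hdT⟩ hdP hd0 hdeg'
      · have hh'c : (C (d.coeff 0)⁻¹ * d).coeff 0 = 1 := by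
          rw [mul_coeff_zero, coeff_C_zero, inv_mul_cancel₀ hc']
        have hstep : f * ⟨_, Xmul_memT A (C (d.coeff 0)⁻¹)⟩
            = xT B A * ⟨_, Xmul_memT A (C (d.coeff 0)⁻¹ * d)⟩ := by
          apply Subtype.ext
          push_cast
          rw [hfd]
          show X * d * (X * C (d.coeff 0)⁻¹) = X * (X * (C (d.coeff 0)⁻¹ * d))
          ring
        have h1 : xT B A * (⟨_, Xmul_memT A (C (d.coeff 0)⁻¹ * d)⟩ : fieldComposite B A) ∈ P :=
          hstep ▸ Ideal.mul_mem_right _ _ hf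
        have h2 : (⟨_, Xmul_memT A (C (d.coeff 0)⁻¹ * d)⟩ : fieldComposite B A) ∈ P := by
          rcases hP.mem_or_mem h1 with h | h
          · exact absurd h hX
          · exact h
        have hh'T : (C (d.coeff 0)⁻¹ * d : Polynomial B) ∈ fieldComposite B A := by
          rw [memT_iff, hh'c]; exact one_mem A
        have hsplit2 : (⟨_, Xmul_memT A (C (d.coeff 0)⁻¹ * d)⟩ : fieldComposite B A)
            = xT B A * ⟨_, hh'T⟩ := Subtype.ext (by push_cast; rfl)
        have h3 : (⟨_, hh'T⟩ : fieldComposite B A) ∈ P := by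
          rcases hP.mem_or_mem (hsplit2 ▸ h2) with h | h
          · exact absurd h hX
          · exact h
        refine ⟨⟨_, hh'T⟩, h3, ?_⟩
        show (C (d.coeff 0)⁻¹ * d).coeff 0 ≠ 0
        rw [hh'c]
        exact one_ne_zero
    · exact ⟨f, hf, hc⟩

lemma fc_span_aux (P : Ideal (fieldComposite B A)) {q : Polynomial B}
    (hq : q ∈ Ideal.span (Subtype.val '' (P : Set (fieldComposite B A)))) :
    ∀ b : B, ∃ p ∈ P, (p : Polynomial B) = X * C b * q := by
  induction hq using Submodule.span_induction with
  | mem x hx =>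
    obtain ⟨p, hp, rfl⟩ := hx
    intro b
    exact ⟨⟨_, Xmul_memT A (C b)⟩ * p, Ideal.mul_mem_left _ _ hp, by push_cast; ring⟩
  | zero =>
    intro b; exact ⟨0, P.zero_mem, by simp⟩
  | add x y hx hy ihx ihy =>
    intro b
    obtain ⟨p, hp, hpe⟩ := ihx b
    obtain ⟨p', hp', hpe'⟩ := ihy b
    exact ⟨p + p', P.add_mem hp hp', by push_cast [hpe, hpe']; ring⟩
  | smul t x hx ihx =>
    intro b
    obtain ⟨s, t0, ht⟩ : ∃ s t0, t = X * s + C t0 :=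
      ⟨t.divX, t.coeff 0, (X_mul_divX_add t).symm⟩
    obtain ⟨p, hp, hpe⟩ := ihx (b * t0)
    obtain ⟨p₁, hp₁, hpe₁⟩ := ihx b
    refine ⟨p + ⟨_, Xmul_memT A s⟩ * p₁, P.add_mem hp (Ideal.mul_mem_left _ _ hp₁), ?_⟩
    push_cast
    rw [hpe, hpe₁, smul_eq_mul, ht, C_mul]
    ring

end FCaux


/-- Let `A ⊆ B` be fields and let `T = A + X B[X]`.  Then every prime
ideal of `T` different from the ideal `X B[X] = {f ∈ T : f has zero constant
coefficient}` is a principal ideal of `T`. -/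
theorem fieldComposite_prime_ideal_isPrincipal (B : Type*) [Field B] (A : Subfield B)
    (P : Ideal (fieldComposite B A)) (hP : P.IsPrime)
    (hne : P ≠ fieldCompositeAugIdeal B A) :
    P.IsPrincipal := by
  classical
  by_cases hbot : P = ⊥
  · rw [hbot]; exact ⟨⟨0, (Ideal.span_zero).symm⟩⟩
  have hX : xT B A ∉ P := fc_X_not_mem P hP hne
  obtain ⟨f, hfP, hf0⟩ := Submodule.exists_mem_ne_zero_of_ne_bot hbot
  have hf0' : (f : Polynomial B) ≠ 0 := fun h => hf0 (Subtype.ext h)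
  obtain ⟨f₀, hf₀P, hf₀c⟩ :=
    fc_exists_const P hP hX (f : Polynomial B).natDegree f hfP hf0' le_rfl
  obtain ⟨g, hgQ⟩ :=
    (IsPrincipalIdealRing.principal
      (Ideal.span (Subtype.val '' (P : Set (fieldComposite B A))))).principal
  have hf₀Q : (f₀ : Polynomial B) ∈ Ideal.span (Subtype.val '' (P : Set (fieldComposite B A))) :=
    Ideal.subset_span ⟨f₀, hf₀P, rfl⟩
  have hgdvd : g ∣ (f₀ : Polynomial B) := by
    rw [hgQ] at hf₀Q; exact Ideal.mem_span_singleton.mp hf₀Q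
  have hgc : g.coeff 0 ≠ 0 := by
    obtain ⟨k, hk⟩ := hgdvd
    intro h
    apply hf₀c
    rw [hk, mul_coeff_zero, h, zero_mul]
  have hg₁c : (C (g.coeff 0)⁻¹ * g).coeff 0 = 1 := by
    rw [mul_coeff_zero, coeff_C_zero, inv_mul_cancel₀ hgc]
  have hg₁T : (C (g.coeff 0)⁻¹ * g : Polynomial B) ∈ fieldComposite B A := by
    rw [memT_iff, hg₁c]; exact one_mem A
  -- the candidate generator
  have hgmem : g ∈ Ideal.span (Subtype.val '' (P : Set (fieldComposite B A))) := by
    rw [hgQ]; exact Ideal.mem_span_singleton.mpr dvd_rfl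
  obtain ⟨p, hpP, hpe⟩ := fc_span_aux P hgmem 1
  have h1 : (C (g.coeff 0)⁻¹ : Polynomial B) * C (g.coeff 0) = 1 := by
    rw [← C_mul, inv_mul_cancel₀ hgc, map_one]
  have hfact : p = (⟨_, Xmul_memT A (C (g.coeff 0))⟩ : fieldComposite B A) * ⟨_, hg₁T⟩ := by
    apply Subtype.ext
    push_cast
    rw [hpe, C_1, mul_one]
    linear_combination (-(X * g)) * h1
  have ht2P : (⟨_, hg₁T⟩ : fieldComposite B A) ∈ P := by
    rcases hP.mem_or_mem (hfact ▸ hpP) with h | h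
    · exfalso
      have hXX : (⟨_, Xmul_memT A (C (g.coeff 0))⟩ : fieldComposite B A)
          * ⟨_, Xmul_memT A (C (g.coeff 0)⁻¹)⟩ = xT B A * xT B A := by
        apply Subtype.ext
        push_cast
        show X * C (g.coeff 0) * (X * C (g.coeff 0)⁻¹) = X * X
        linear_combination (X * X) * h1
      have : xT B A * xT B A ∈ P := hXX ▸ Ideal.mul_mem_right _ _ h
      rcases hP.mem_or_mem this with h' | h' <;> exact hX h'
    · exact h
  refine ⟨⟨⟨_, hg₁T⟩, ?_⟩⟩
  apply le_antisymm
  · intro f' hf'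
    have hf'Q : (f' : Polynomial B)
        ∈ Ideal.span (Subtype.val '' (P : Set (fieldComposite B A))) :=
      Ideal.subset_span ⟨f', hf', rfl⟩
    obtain ⟨k, hk⟩ : g ∣ (f' : Polynomial B) := by
      rw [hgQ] at hf'Q; exact Ideal.mem_span_singleton.mp hf'Q
    have hkT : (C (g.coeff 0) * k : Polynomial B) ∈ fieldComposite B A := by
      rw [memT_iff, mul_coeff_zero, coeff_C_zero]
      have : (f' : Polynomial B).coeff 0 = g.coeff 0 * k.coeff 0 := by
        rw [hk, mul_coeff_zero]
      exact this ▸ f'.2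
    refine Ideal.mem_span_singleton.mpr ⟨⟨_, hkT⟩, ?_⟩
    apply Subtype.ext
    push_cast
    rw [hk]
    linear_combination (-(g * k)) * h1
  · exact (Submodule.span_singleton_le_iff_mem _ _).mpr ht2P
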